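/- arXiv:1402.2663 — 2 statements merged into one kernel-verified Lean document; each statement's English description precedes it below -/
import Mathlib

section
/- For any graphs G and H of orders n and n' respectively, the vertex cover number of the lexicographic product satisfies α(G∘H) = n·α(H) + n'·α(G) − α(G)·α(H). -/
open SimpleGraph

namespace Paper

variable {α β : Type*}

/-- The lexicographic product of two simple graphs. -/
def lexProd (G : SimpleGraph α) (H : SimpleGraph β) : SimpleGraph (α × β) where
  Adj p q := G.Adj p.1 q.1 ∨ (p.1 = q.1 ∧ H.Adj p.2 q.2)
  symm := by
    constructor
    rintro ⟨a, b⟩ ⟨c, d⟩ (h | ⟨h1, h2⟩)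
    · exact Or.inl h.symm
    · exact Or.inr ⟨h1.symm, h2.symm⟩
  loopless := by
    constructor
    rintro ⟨a, b⟩ (h | ⟨h1, h2⟩)
    · exact G.loopless.irrefl a h
    · exact H.loopless.irrefl b h2

/-- `u` is maximally distant from `v`. -/
def MaxDistant (G : SimpleGraph α) (u v : α) : Prop :=
  ∀ w, G.Adj u w → G.edist v w ≤ G.edist u v

/-- `u` and `v` are mutually maximally distant. -/
def MMD (G : SimpleGraph α) (u v : α) : Prop :=
  MaxDistant G u v ∧ MaxDistant G v u

/-- Two vertices are true twins if they have the same closed neighborhood. -/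
def TrueTwins (G : SimpleGraph α) (u v : α) : Prop :=
  ∀ w, (G.Adj u w ∨ u = w) ↔ (G.Adj v w ∨ v = w)

/-- The boundary of a graph: vertices belonging to some mutually maximally distant pair. -/
def boundary (G : SimpleGraph α) : Set α := {u | ∃ v, u ≠ v ∧ MMD G u v}

/-- The strong resolving graph of `G`, with vertex set the boundary of `G`. -/
def srGraph (G : SimpleGraph α) : SimpleGraph (boundary G) where
  Adj u v := u.1 ≠ v.1 ∧ MMD G u.1 v.1
  symm := ⟨fun u v h => ⟨h.1.symm, h.2.2, h.2.1⟩⟩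
  loopless := ⟨fun u h => h.1 rfl⟩

/-- The graph `G*`: same vertices, `u ~ v` iff `d_G(u,v) ≥ 2` or `u,v` are true twins. -/
def gstar (G : SimpleGraph α) : SimpleGraph α where
  Adj u v := u ≠ v ∧ (2 ≤ G.edist u v ∨ TrueTwins G u v)
  symm := by
    constructor
    rintro u v ⟨h1, (h2 | h2)⟩
    · exact ⟨h1.symm, Or.inl (by rwa [G.edist_comm] at h2)⟩
    · exact ⟨h1.symm, Or.inr fun w => (h2 w).symm⟩
  loopless := ⟨fun u h => h.1 rfl⟩

/-- `G*` with its isolated vertices removed. -/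
def gstarMinus (G : SimpleGraph α) : SimpleGraph {x | ∃ y, (gstar G).Adj x y} :=
  SimpleGraph.induce _ (gstar G)

/-- Disjoint union of two graphs. -/
def disjUnion (G : SimpleGraph α) (H : SimpleGraph β) : SimpleGraph (α ⊕ β) where
  Adj x y := match x, y with
    | Sum.inl a, Sum.inl b => G.Adj a b
    | Sum.inr a, Sum.inr b => H.Adj a b
    | _, _ => False
  symm := by
    constructor
    rintro (a | a) (b | b) h <;> simp_all <;> exact h.symm
  loopless := by
    constructor
    rintro (a | a) h <;> simp_all

/-- `k` disjoint copies of a graph. -/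
def copies (k : ℕ) (G : SimpleGraph α) : SimpleGraph (Fin k × α) where
  Adj p q := p.1 = q.1 ∧ G.Adj p.2 q.2
  symm := ⟨fun p q h => ⟨h.1.symm, h.2.symm⟩⟩
  loopless := ⟨fun p h => G.loopless.irrefl _ h.2⟩

/-- The join `K₁ + H` of a single vertex with `H`. -/
def joinK1 (H : SimpleGraph β) : SimpleGraph (Unit ⊕ β) where
  Adj x y := match x, y with
    | Sum.inl _, Sum.inl _ => False
    | Sum.inl _, Sum.inr _ => True
    | Sum.inr _, Sum.inl _ => True
    | Sum.inr a, Sum.inr b => H.Adj a b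
  symm := by
    constructor
    rintro (a | a) (b | b) h <;> simp_all <;> exact h.symm
  loopless := by
    constructor
    rintro (a | a) h <;> simp_all

/-- `w` strongly resolves the pair `u, v`. -/
def StronglyResolves (G : SimpleGraph α) (w u v : α) : Prop :=
  G.edist w u = G.edist w v + G.edist v u ∨ G.edist w v = G.edist w u + G.edist u v

/-- A strong metric generator. -/
def IsStrongGenerator (G : SimpleGraph α) (S : Finset α) : Prop :=
  ∀ u v : α, u ≠ v → ∃ w ∈ S, StronglyResolves G w u v

/-- The strong metric dimension. -/
noncomputable def sdim (G : SimpleGraph α) : ℕ :=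
  sInf {k | ∃ S : Finset α, IsStrongGenerator G S ∧ S.card = k}

/-- A vertex cover. -/
def IsVertexCover (G : SimpleGraph α) (S : Finset α) : Prop :=
  ∀ ⦃u v : α⦄, G.Adj u v → u ∈ S ∨ v ∈ S

/-- The vertex cover number `α(G)`. -/
noncomputable def vcNum (G : SimpleGraph α) : ℕ :=
  sInf {k | ∃ S : Finset α, IsVertexCover G S ∧ S.card = k}

/-- The independence number `β(G)`. -/
noncomputable def indepNum (G : SimpleGraph α) : ℕ :=
  sSup {k | ∃ S : Finset α, (∀ u ∈ S, ∀ v ∈ S, ¬ G.Adj u v) ∧ S.card = k}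

lemma exists_min_cover [Fintype α] (G : SimpleGraph α) :
    ∃ S : Finset α, IsVertexCover G S ∧ S.card = vcNum G := by
  have hne : {k | ∃ S : Finset α, IsVertexCover G S ∧ S.card = k}.Nonempty :=
    ⟨Finset.univ.card, Finset.univ, fun u v _ => Or.inl (Finset.mem_univ u), rfl⟩
  exact Nat.sInf_mem hne

lemma vcNum_le_card_of_cover [Fintype α] (G : SimpleGraph α) (S : Finset α)
    (h : IsVertexCover G S) : vcNum G ≤ S.card :=
  Nat.sInf_le ⟨S, h, rfl⟩

lemma indep_card_add_vcNum [Fintype α] [DecidableEq α] (G : SimpleGraph α) (I : Finset α)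
    (h : ∀ u ∈ I, ∀ v ∈ I, ¬ G.Adj u v) : I.card + vcNum G ≤ Fintype.card α := by
  have hc : IsVertexCover G Iᶜ := by
    intro u v huv
    by_contra hcon
    push_neg at hcon
    simp only [Finset.notMem_compl] at hcon
    exact h u hcon.1 v hcon.2 huv
  have := vcNum_le_card_of_cover G Iᶜ hc
  rw [Finset.card_compl] at this
  have := Finset.card_le_univ I
  omega

theorem stmt_10 [Fintype α] [Fintype β] (G : SimpleGraph α) (H : SimpleGraph β) :
    vcNum (lexProd G H) =
      Fintype.card α * vcNum H + Fintype.card β * vcNum G - vcNum G * vcNum H := by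
  classical
  have ha : vcNum G ≤ Fintype.card α := by
    have := indep_card_add_vcNum G ∅ (by simp)
    simpa using this
  have hb : vcNum H ≤ Fintype.card β := by
    have := indep_card_add_vcNum H ∅ (by simp)
    simpa using this
  -- Upper bound via explicit cover
  obtain ⟨A, hA, hAcard⟩ := exists_min_cover G
  obtain ⟨B, hB, hBcard⟩ := exists_min_cover H
  have up : vcNum (lexProd G H) ≤
      vcNum G * Fintype.card β + (Fintype.card α - vcNum G) * vcNum H := by
    have hcov : IsVertexCover (lexProd G H) (A ×ˢ Finset.univ ∪ Aᶜ ×ˢ B) := by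
      rintro ⟨u, x⟩ ⟨v, y⟩ (h | ⟨h1, h2⟩)
      · rcases hA h with hu | hv
        · exact Or.inl (Finset.mem_union_left _
            (Finset.mem_product.2 ⟨hu, Finset.mem_univ x⟩))
        · exact Or.inr (Finset.mem_union_left _
            (Finset.mem_product.2 ⟨hv, Finset.mem_univ y⟩))
      · by_cases hu : u ∈ A
        · exact Or.inl (Finset.mem_union_left _
            (Finset.mem_product.2 ⟨hu, Finset.mem_univ x⟩))
        · rcases hB h2 with hx | hy
          · exact Or.inl (Finset.mem_union_right _
              (Finset.mem_product.2 ⟨Finset.mem_compl.2 hu, hx⟩))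
          · refine Or.inr (Finset.mem_union_right _
              (Finset.mem_product.2 ⟨Finset.mem_compl.2 ?_, hy⟩))
            rwa [← h1]
    have hdisj : Disjoint (A ×ˢ (Finset.univ : Finset β)) (Aᶜ ×ˢ B) := by
      rw [Finset.disjoint_left]
      rintro ⟨u, x⟩ h1 h2
      rw [Finset.mem_product] at h1 h2
      exact (Finset.mem_compl.1 h2.1) h1.1
    have hle := vcNum_le_card_of_cover _ _ hcov
    rwa [Finset.card_union_of_disjoint hdisj, Finset.card_product, Finset.card_product,
      Finset.card_univ, Finset.card_compl, hAcard, hBcard] at hle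
  -- Lower bound via the independent complement of a minimum cover
  obtain ⟨S, hS, hScard⟩ := exists_min_cover (lexProd G H)
  have hIind : ∀ p ∈ Sᶜ, ∀ q ∈ Sᶜ, ¬ (lexProd G H).Adj p q := by
    intro p hp q hq hadj
    rcases hS hadj with h | h
    · exact Finset.mem_compl.1 hp h
    · exact Finset.mem_compl.1 hq h
  have hPind : ∀ u ∈ Sᶜ.image Prod.fst, ∀ v ∈ Sᶜ.image Prod.fst, ¬ G.Adj u v := by
    intro u hu v hv hadj
    obtain ⟨p, hp, hpu⟩ := Finset.mem_image.1 hu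
    obtain ⟨q, hq, hqv⟩ := Finset.mem_image.1 hv
    exact hIind p hp q hq (Or.inl (by rw [hpu, hqv]; exact hadj))
  have hPcard : (Sᶜ.image Prod.fst).card ≤ Fintype.card α - vcNum G := by
    have := indep_card_add_vcNum G _ hPind
    omega
  have hfiber : ∀ u : α,
      (Sᶜ.filter fun p => p.1 = u).card ≤ Fintype.card β - vcNum H := by
    intro u
    have hinj : Set.InjOn Prod.snd (((Sᶜ.filter fun p => p.1 = u) : Finset (α × β)) : Set (α × β)) := by
      intro p hp q hq hpq
      simp only [Finset.coe_filter, Set.mem_setOf_eq] at hp hq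
      exact Prod.ext (hp.2.trans hq.2.symm) hpq
    have hcardeq : ((Sᶜ.filter fun p => p.1 = u).image Prod.snd).card
        = (Sᶜ.filter fun p => p.1 = u).card := Finset.card_image_of_injOn hinj
    have hind : ∀ x ∈ (Sᶜ.filter fun p => p.1 = u).image Prod.snd,
        ∀ y ∈ (Sᶜ.filter fun p => p.1 = u).image Prod.snd, ¬ H.Adj x y := by
      intro x hx y hy hadj
      obtain ⟨p, hp, hpx⟩ := Finset.mem_image.1 hx
      obtain ⟨q, hq, hqy⟩ := Finset.mem_image.1 hy
      have hp' := Finset.mem_filter.1 hp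
      have hq' := Finset.mem_filter.1 hq
      exact hIind p hp'.1 q hq'.1
        (Or.inr ⟨hp'.2.trans hq'.2.symm, by rw [hpx, hqy]; exact hadj⟩)
    have := indep_card_add_vcNum H _ hind
    omega
  have hIcard : Sᶜ.card ≤ (Fintype.card α - vcNum G) * (Fintype.card β - vcNum H) := by
    have h1 : Sᶜ.card = ∑ u ∈ Sᶜ.image Prod.fst, (Sᶜ.filter fun p => p.1 = u).card :=
      Finset.card_eq_sum_card_fiberwise fun p hp => Finset.mem_image_of_mem Prod.fst hp
    calc Sᶜ.card = ∑ u ∈ Sᶜ.image Prod.fst, (Sᶜ.filter fun p => p.1 = u).card := h1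
      _ ≤ ∑ _u ∈ Sᶜ.image Prod.fst, (Fintype.card β - vcNum H) :=
          Finset.sum_le_sum fun u _ => hfiber u
      _ = (Sᶜ.image Prod.fst).card * (Fintype.card β - vcNum H) := by
          rw [Finset.sum_const, smul_eq_mul]
      _ ≤ (Fintype.card α - vcNum G) * (Fintype.card β - vcNum H) :=
          Nat.mul_le_mul_right _ hPcard
  have hsum : vcNum (lexProd G H) + Sᶜ.card = Fintype.card α * Fintype.card β := by
    have h := Finset.card_add_card_compl S
    rw [Fintype.card_prod, hScard] at h
    exact h
  -- Arithmetic conclusion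
  obtain ⟨c, hc⟩ : ∃ c, Fintype.card α = vcNum G + c := ⟨_, (Nat.add_sub_cancel' ha).symm⟩
  obtain ⟨d, hd⟩ : ∃ d, Fintype.card β = vcNum H + d := ⟨_, (Nat.add_sub_cancel' hb).symm⟩
  have e1 : Fintype.card α - vcNum G = c := by omega
  have e2 : Fintype.card β - vcNum H = d := by omega
  rw [e1, e2] at hIcard
  rw [e1, hd] at up
  have up' : vcNum (lexProd G H) ≤ vcNum G * vcNum H + vcNum G * d + c * vcNum H := by
    calc vcNum (lexProd G H) ≤ vcNum G * (vcNum H + d) + c * vcNum H := up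
      _ = vcNum G * vcNum H + vcNum G * d + c * vcNum H := by ring
  have low : vcNum G * vcNum H + vcNum G * d + c * vcNum H ≤ vcNum (lexProd G H) := by
    rw [hc, hd] at hsum
    have h3 : (vcNum G + c) * (vcNum H + d)
        = (vcNum G * vcNum H + vcNum G * d + c * vcNum H) + c * d := by ring
    rw [h3] at hsum
    have h4 : vcNum G * vcNum H + vcNum G * d + c * vcNum H + c * d
        ≤ vcNum (lexProd G H) + c * d := by
      calc vcNum G * vcNum H + vcNum G * d + c * vcNum H + c * d
          = vcNum (lexProd G H) + Sᶜ.card := hsum.symm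
        _ ≤ vcNum (lexProd G H) + c * d := Nat.add_le_add_left hIcard _
    exact Nat.le_of_add_le_add_right h4
  have hfin : (vcNum G + c) * vcNum H + (vcNum H + d) * vcNum G
      = vcNum G * vcNum H + (vcNum G * vcNum H + vcNum G * d + c * vcNum H) := by ring
  rw [hc, hd, hfin, Nat.add_sub_cancel_left]
  exact le_antisymm up' low


end Paper
end

section
/- Let G be a connected graph of order n ≥ 2 with no true twin vertices and let H be a graph of order n' ≥ 2 with diameter D(H) > 2 (including disconnected H, treated as infinite diameter). Then dim_s(G∘H) = n·dim_s(K₁+H) + n'·dim_s(G) − dim_s(G)·dim_s(K₁+H). -/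
open SimpleGraph

namespace Paper

variable {α β : Type*}

section Generic
variable {V : Type*} {G : SimpleGraph V}

lemma edist_comm' (G : SimpleGraph V) (x y : V) : G.edist x y = G.edist y x :=
  SimpleGraph.edist_comm

lemma edist_fin (hG : G.Connected) (u v : V) : G.edist u v ≠ ⊤ :=
  edist_ne_top_iff_reachable.mpr (hG u v)

lemma exists_adj_closer {w v : V} (h : G.edist w v ≠ ⊤) (hne : w ≠ v) :
    ∃ v', G.Adj v v' ∧ G.edist w v' + 1 = G.edist w v := by
  have h' : G.edist v w ≠ ⊤ := by rwa [edist_comm]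
  obtain ⟨p, hp⟩ := exists_walk_of_edist_ne_top h'
  cases p with
  | nil => exact absurd rfl hne.symm
  | cons hadj q =>
      rename_i v'
      refine ⟨v', hadj, ?_⟩
      have h1 : G.edist w v' ≤ q.length := by rw [edist_comm]; exact edist_le q
      have h2 : G.edist w v ≤ G.edist w v' + 1 := by
        calc G.edist w v ≤ G.edist w v' + G.edist v' v := SimpleGraph.edist_triangle
          _ ≤ G.edist w v' + 1 := by
              gcongr
              rw [edist_comm]; exact edist_le hadj.toWalk
      have h3 : G.edist w v = q.length + 1 := by
        rw [edist_comm, ← hp]; simp [SimpleGraph.Walk.length_cons]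
      refine le_antisymm ?_ h2
      rw [h3]; exact add_le_add h1 le_rfl

lemma resolve_self_left (G : SimpleGraph V) (u v : V) : StronglyResolves G u u v :=
  Or.inr (by simp [SimpleGraph.edist_self])

lemma resolve_self_right (G : SimpleGraph V) (u v : V) : StronglyResolves G v u v :=
  Or.inl (by simp [SimpleGraph.edist_self])

lemma aux_eq_of_resolve (hG : G.Connected) {u v w : V} (hmax : MaxDistant G v u)
    (h : G.edist w u = G.edist w v + G.edist v u) : w = v := by
  by_contra hw
  obtain ⟨v', hadj, hv'⟩ := exists_adj_closer (edist_fin hG w v) hw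
  have h1 : G.edist u v' ≤ G.edist v u := hmax v' hadj
  have h2 : G.edist w u ≤ G.edist w v' + G.edist v' u := SimpleGraph.edist_triangle
  rw [h, ← hv'] at h2
  rw [edist_comm] at h1
  have hfin := edist_fin hG
  lift G.edist w v' to ℕ using hfin w v' with k
  lift G.edist v u to ℕ using hfin v u with l
  lift G.edist v' u to ℕ using hfin v' u with m
  rw [show ((1:ℕ∞)) = ((1:ℕ):ℕ∞) from rfl] at h2
  norm_cast at h1 h2
  omega

lemma mem_of_resolve_mmd (hG : G.Connected) {u v w : V} (hm : MMD G u v)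
    (hw : StronglyResolves G w u v) : w = u ∨ w = v := by
  rcases hw with h | h
  · exact Or.inr (aux_eq_of_resolve hG hm.2 h)
  · exact Or.inl (aux_eq_of_resolve hG hm.1 h)

lemma edist_lt_card [Fintype V] (hG : G.Connected) (u v : V) :
    (G.edist u v).toNat < Fintype.card V := by
  classical
  obtain ⟨p, hp⟩ := exists_walk_of_edist_ne_top (edist_fin hG u v)
  have h1 : G.edist u v ≤ p.toPath.1.length := edist_le _
  have h2 : p.toPath.1.length < Fintype.card V := p.toPath.2.length_lt
  have := ENat.toNat_le_toNat h1 (by exact_mod_cast ENat.coe_ne_top _)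
  simpa using lt_of_le_of_lt this h2

lemma exists_maxDistant_aux [Fintype V] (hG : G.Connected) (v : V) :
    ∀ (n : ℕ) (u : V), Fintype.card V ≤ (G.edist v u).toNat + n →
      ∃ u', MaxDistant G u' v ∧ G.edist v u' = G.edist v u + G.edist u u' := by
  intro n
  induction n with
  | zero => intro u hu; exact absurd (edist_lt_card hG v u) (by omega)
  | succ n ih =>
      intro u hu
      by_cases hmax : MaxDistant G u v
      · exact ⟨u, hmax, by simp [SimpleGraph.edist_self]⟩
      · rw [MaxDistant] at hmax
        push_neg at hmax
        obtain ⟨w, hadj, hw⟩ := hmax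
        have h1 : G.edist v w = G.edist v u + 1 := by
          have hle : G.edist v w ≤ G.edist v u + 1 := by
            calc G.edist v w ≤ G.edist v u + G.edist u w := SimpleGraph.edist_triangle
              _ ≤ G.edist v u + 1 := by gcongr; exact edist_le hadj.toWalk
          rw [edist_comm' G u v] at hw
          have hge : G.edist v u + 1 ≤ G.edist v w := Order.add_one_le_of_lt hw
          exact le_antisymm hle hge
        obtain ⟨u', hu', heq⟩ := ih w (by
          have : (G.edist v w).toNat = (G.edist v u).toNat + 1 := by
            rw [h1, ENat.toNat_add (edist_fin hG v u) (by simp)]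
            simp
          omega)
        refine ⟨u', hu', le_antisymm SimpleGraph.edist_triangle ?_⟩
        have h2 : G.edist u u' ≤ 1 + G.edist w u' := by
          calc G.edist u u' ≤ G.edist u w + G.edist w u' := SimpleGraph.edist_triangle
            _ ≤ 1 + G.edist w u' := by gcongr; exact edist_le hadj.toWalk
        calc G.edist v u + G.edist u u' ≤ G.edist v u + (1 + G.edist w u') := by gcongr
          _ = G.edist v w + G.edist w u' := by rw [h1]; ring
          _ = G.edist v u' := heq.symm

lemma exists_maxDistant [Fintype V] (hG : G.Connected) (v u : V) :
    ∃ u', MaxDistant G u' v ∧ G.edist v u' = G.edist v u + G.edist u u' :=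
  exists_maxDistant_aux hG v (Fintype.card V) u (by omega)

lemma generator_of_cover [Fintype V] (hG : G.Connected) (S : Finset V)
    (hcov : ∀ u v : V, u ≠ v → MMD G u v → u ∈ S ∨ v ∈ S) :
    IsStrongGenerator G S := by
  intro u v huv
  obtain ⟨u', hu', hequ⟩ := exists_maxDistant hG v u
  obtain ⟨v', hv', heqv⟩ := exists_maxDistant hG u' v
  have hmm : MMD G u' v' := by
    refine ⟨?_, hv'⟩
    intro w hadj
    calc G.edist v' w ≤ G.edist v' v + G.edist v w := SimpleGraph.edist_triangle
      _ ≤ G.edist v' v + G.edist u' v := by gcongr; exact hu' w hadj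
      _ = G.edist u' v' := by rw [edist_comm' G v' v, heqv]; ring
  have hne : u' ≠ v' := by
    rintro rfl
    rw [SimpleGraph.edist_self, eq_comm, add_eq_zero] at heqv
    rw [heqv.2, eq_comm, add_eq_zero, edist_eq_zero_iff] at hequ
    exact huv hequ.1.symm
  rcases hcov u' v' hne hmm with hs | hs
  · refine ⟨u', hs, Or.inr ?_⟩
    rw [edist_comm' G u' v, hequ, edist_comm' G v u, edist_comm' G u u']
    ring
  · refine ⟨v', hs, Or.inl ?_⟩
    have htri : G.edist v u + G.edist u u' + G.edist v v' ≤ G.edist v' u + G.edist u u' := by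
      calc G.edist v u + G.edist u u' + G.edist v v'
          = G.edist v' u' := by rw [edist_comm' G v' u', heqv, ← hequ, edist_comm' G v u']
        _ ≤ G.edist v' u + G.edist u u' := SimpleGraph.edist_triangle
    have hle : G.edist v' u ≤ G.edist v' v + G.edist v u := SimpleGraph.edist_triangle
    have hfin := edist_fin hG
    refine le_antisymm hle ?_
    rw [show G.edist v' v = G.edist v v' from edist_comm' G v' v]
    lift G.edist v u to ℕ using hfin v u with k
    lift G.edist u u' to ℕ using hfin u u' with l
    lift G.edist v v' to ℕ using hfin v v' with m
    lift G.edist v' u to ℕ using hfin v' u with p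
    norm_cast at htri ⊢
    omega
end Generic

section Part2
variable {V : Type*} {G : SimpleGraph V}

lemma univ_generator [Fintype V] (G : SimpleGraph V) :
    IsStrongGenerator G (Finset.univ) := fun u v _ =>
  ⟨v, Finset.mem_univ v, Or.inl (by simp [SimpleGraph.edist_self])⟩

lemma sdim_set_nonempty [Fintype V] (G : SimpleGraph V) :
    {k | ∃ S : Finset V, IsStrongGenerator G S ∧ S.card = k}.Nonempty :=
  ⟨_, Finset.univ, univ_generator G, rfl⟩

lemma sdim_le_card_of_generator [Fintype V] {S : Finset V}
    (hS : IsStrongGenerator G S) : sdim G ≤ S.card :=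
  Nat.sInf_le ⟨S, hS, rfl⟩

lemma exists_sdim_generator [Fintype V] (G : SimpleGraph V) :
    ∃ S : Finset V, IsStrongGenerator G S ∧ S.card = sdim G :=
  Nat.sInf_mem (sdim_set_nonempty G)

end Part2

section Lex
variable {G : SimpleGraph α} {H : SimpleGraph β}

lemma lex_adj {p q : α × β} :
    (lexProd G H).Adj p q ↔ (G.Adj p.1 q.1 ∨ (p.1 = q.1 ∧ H.Adj p.2 q.2)) := Iff.rfl

lemma lex_adj_same {a : α} {b d : β} :
    (lexProd G H).Adj (a, b) (a, d) ↔ H.Adj b d := by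
  constructor
  · rintro (h | ⟨-, h⟩)
    · exact absurd h (G.irrefl)
    · exact h
  · exact fun h => Or.inr ⟨rfl, h⟩

lemma lex_edist_le_walk {a c : α} (p : G.Walk a c) (hne : a ≠ c) (b d : β) :
    (lexProd G H).edist (a, b) (c, d) ≤ p.length := by
  induction p with
  | nil => exact absurd rfl hne
  | @cons a a' c h q ih =>
      by_cases hac : a' = c
      · subst hac
        have hadj : (lexProd G H).Adj (a, b) (a', d) := Or.inl h
        calc (lexProd G H).edist (a, b) (a', d) ≤ 1 := edist_le hadj.toWalk
          _ ≤ (q.cons h).length := by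
              simp [SimpleGraph.Walk.length_cons]
      · have hadj : (lexProd G H).Adj (a, b) (a', b) := Or.inl h
        calc (lexProd G H).edist (a, b) (c, d)
            ≤ (lexProd G H).edist (a, b) (a', b) + (lexProd G H).edist (a', b) (c, d) :=
              SimpleGraph.edist_triangle
          _ ≤ 1 + q.length := by
              gcongr
              · exact edist_le hadj.toWalk
              · exact ih hac
          _ ≤ (q.cons h).length := by
              simp [SimpleGraph.Walk.length_cons]; rw [add_comm]

lemma lex_edist_ge {p q : α × β} (w : (lexProd G H).Walk p q) :
    G.edist p.1 q.1 ≤ w.length := by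
  induction w with
  | nil => simp [SimpleGraph.edist_self]
  | @cons p r q h w ih =>
      rcases h with h | ⟨h, -⟩
      · calc G.edist p.1 q.1 ≤ G.edist p.1 r.1 + G.edist r.1 q.1 := SimpleGraph.edist_triangle
          _ ≤ 1 + w.length := by gcongr; exact edist_le h.toWalk
          _ = (SimpleGraph.Walk.cons _ w).length := by
              change (1:ℕ∞) + w.length = ((w.length + 1 : ℕ) : ℕ∞)
              push_cast; rw [add_comm]
      · have h' : G.edist p.1 q.1 = G.edist r.1 q.1 := by rw [h]
        rw [h']
        calc G.edist r.1 q.1 ≤ w.length := ih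
          _ ≤ (SimpleGraph.Walk.cons _ w).length := by
              change (w.length : ℕ∞) ≤ ((w.length + 1 : ℕ) : ℕ∞)
              exact_mod_cast Nat.le_succ _

lemma lex_edist_of_ne (hG : G.Connected) {a c : α} (hne : a ≠ c) (b d : β) :
    (lexProd G H).edist (a, b) (c, d) = G.edist a c := by
  obtain ⟨p, hp⟩ := exists_walk_of_edist_ne_top (edist_fin hG a c)
  refine le_antisymm (by rw [← hp]; exact_mod_cast lex_edist_le_walk p hne b d) ?_
  have hfin : (lexProd G H).edist (a, b) (c, d) ≠ ⊤ := by
    intro htop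
    have := lex_edist_le_walk (H := H) p hne b d
    rw [htop] at this
    simp at this
  obtain ⟨w, hw⟩ := exists_walk_of_edist_ne_top hfin
  rw [← hw]
  exact_mod_cast lex_edist_ge w

lemma exists_adj_vertex [Fintype α] (hG : G.Connected) (hn : 2 ≤ Fintype.card α) (a : α) :
    ∃ a', G.Adj a a' := by
  obtain ⟨b, hb⟩ := Fintype.exists_ne_of_one_lt_card (by omega) a
  obtain ⟨w⟩ := hG a b
  cases w with
  | nil => exact absurd rfl hb
  | cons h q => exact ⟨_, h⟩

lemma lex_edist_same_le_two [Fintype α] (hG : G.Connected) (hn : 2 ≤ Fintype.card α)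
    (a : α) (b d : β) : (lexProd G H).edist (a, b) (a, d) ≤ 2 := by
  obtain ⟨a', ha'⟩ := exists_adj_vertex hG hn a
  have h1 : (lexProd G H).Adj (a, b) (a', d) := Or.inl ha'
  have h2 : (lexProd G H).Adj (a', d) (a, d) := Or.inl ha'.symm
  calc (lexProd G H).edist (a, b) (a, d)
      ≤ (lexProd G H).edist (a, b) (a', d) + (lexProd G H).edist (a', d) (a, d) :=
        SimpleGraph.edist_triangle
    _ ≤ 1 + 1 := by
        gcongr
        · exact edist_le h1.toWalk
        · exact edist_le h2.toWalk
    _ = 2 := one_add_one_eq_two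

lemma two_le_edist_of {V : Type*} {G' : SimpleGraph V} {x y : V} (hne : x ≠ y)
    (hnadj : ¬G'.Adj x y) : 2 ≤ G'.edist x y := by
  have h0 : G'.edist x y ≠ 0 := fun hc => hne (SimpleGraph.edist_eq_zero_iff.mp hc)
  have h1 : G'.edist x y ≠ 1 := fun hc => hnadj (SimpleGraph.edist_eq_one_iff_adj.mp hc)
  have : 1 < G'.edist x y := lt_of_le_of_ne (Order.one_le_iff_pos.mpr (pos_iff_ne_zero.mpr h0)) (Ne.symm h1)
  calc (2 : ℕ∞) = 1 + 1 := one_add_one_eq_two.symm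
    _ ≤ G'.edist x y := Order.add_one_le_of_lt this

lemma lex_edist_same_adj {a : α} {b d : β} (h : H.Adj b d) :
    (lexProd G H).edist (a, b) (a, d) = 1 :=
  edist_eq_one_iff_adj.mpr (lex_adj_same.mpr h)

lemma lex_edist_same_nonadj [Fintype α] (hG : G.Connected) (hn : 2 ≤ Fintype.card α)
    {a : α} {b d : β} (hbd : b ≠ d) (h : ¬H.Adj b d) :
    (lexProd G H).edist (a, b) (a, d) = 2 :=
  le_antisymm (lex_edist_same_le_two hG hn a b d)
    (two_le_edist_of (by simp [hbd]) (fun hc => h (lex_adj_same.mp hc)))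

lemma lex_connected [Fintype α] [Nonempty β] (hG : G.Connected) (hn : 2 ≤ Fintype.card α) :
    (lexProd G H).Connected := by
  have hne : Nonempty (α × β) := by
    have : Nonempty α := hG.nonempty
    infer_instance
  rw [SimpleGraph.connected_iff]
  refine ⟨fun p q => ?_, hne⟩
  obtain ⟨a, b⟩ := p
  obtain ⟨c, d⟩ := q
  by_cases hac : a = c
  · subst hac
    by_cases hbd : b = d
    · subst hbd; exact SimpleGraph.Reachable.refl _
    · apply reachable_of_edist_ne_top
      intro htop
      have := lex_edist_same_le_two (H := H) hG hn a b d
      rw [htop] at this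
      simp at this
  · apply reachable_of_edist_ne_top
    rw [lex_edist_of_ne hG hac b d]
    exact edist_fin hG a c

section JoinK1

lemma joinK1_adj_inr {b d : β} :
    (joinK1 H).Adj (Sum.inr b) (Sum.inr d) ↔ H.Adj b d := Iff.rfl

lemma joinK1_adj_inl_inr (u : Unit) (b : β) : (joinK1 H).Adj (Sum.inl u) (Sum.inr b) :=
  trivial

lemma joinK1_connected [Nonempty β] : (joinK1 H).Connected := by
  rw [SimpleGraph.connected_iff]
  have hr : ∀ x : Unit ⊕ β, (joinK1 H).Reachable x (Sum.inl ()) := by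
    rintro (u | b)
    · cases u; exact SimpleGraph.Reachable.refl _
    · exact ((joinK1_adj_inl_inr () b).symm).reachable
  exact ⟨fun x y => (hr x).trans (hr y).symm, inferInstance⟩

lemma joinK1_edist_inl_inr (u : Unit) (b : β) :
    (joinK1 H).edist (Sum.inl u) (Sum.inr b) = 1 :=
  edist_eq_one_iff_adj.mpr (joinK1_adj_inl_inr u b)

lemma joinK1_edist_le_two (x y : Unit ⊕ β) : (joinK1 H).edist x y ≤ 2 := by
  have key : ∀ z : Unit ⊕ β, (joinK1 H).edist z (Sum.inl ()) ≤ 1 := by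
    rintro (u | b)
    · cases u; simp [SimpleGraph.edist_self]
    · exact edist_le ((joinK1_adj_inl_inr () b).symm).toWalk
  calc (joinK1 H).edist x y
      ≤ (joinK1 H).edist x (Sum.inl ()) + (joinK1 H).edist (Sum.inl ()) y :=
        SimpleGraph.edist_triangle
    _ ≤ 1 + 1 := by
        gcongr
        · exact key x
        · rw [edist_comm' _ _ y]; exact key y
    _ = 2 := one_add_one_eq_two

lemma joinK1_edist_inr_adj {b d : β} (h : H.Adj b d) :
    (joinK1 H).edist (Sum.inr b) (Sum.inr d) = 1 :=
  edist_eq_one_iff_adj.mpr (joinK1_adj_inr.mpr h)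

lemma joinK1_edist_inr_nonadj {b d : β} (hbd : b ≠ d) (h : ¬H.Adj b d) :
    (joinK1 H).edist (Sum.inr b) (Sum.inr d) = 2 :=
  le_antisymm (joinK1_edist_le_two _ _)
    (two_le_edist_of (by simp [hbd]) (fun hc => h (joinK1_adj_inr.mp hc)))

end JoinK1

section MMDchar
variable [Fintype α]

lemma exists_nonadj (hdiam : 2 < H.ediam) (d : β) : ∃ x, x ≠ d ∧ ¬H.Adj d x := by
  by_contra hc
  push_neg at hc
  have h2 : H.ediam ≤ 2 := by
    apply ediam_le_of_edist_le
    intro u v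
    have key : ∀ z, H.edist z d ≤ 1 := by
      intro z
      by_cases hz : z = d
      · subst hz; simp [SimpleGraph.edist_self]
      · exact edist_le ((hc z hz).symm).toWalk
    calc H.edist u v ≤ H.edist u d + H.edist d v := SimpleGraph.edist_triangle
      _ ≤ 1 + 1 := by
          gcongr
          · exact key u
          · rw [edist_comm' _ d v]; exact key v
      _ = 2 := one_add_one_eq_two
  exact absurd h2 (not_le.mpr hdiam)

/-- The condition characterising one side of MMD inside a column / in `K₁+H`. -/
def OneSide (H : SimpleGraph β) (b d : β) : Prop :=
  H.Adj b d → ∀ x, H.Adj b x → x = d ∨ H.Adj d x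

lemma maxDistant_lex_same (hG : G.Connected) (hn : 2 ≤ Fintype.card α)
    {a : α} {b d : β} (hbd : b ≠ d) :
    MaxDistant (lexProd G H) (a, b) (a, d) ↔ OneSide H b d := by
  constructor
  · intro hm hadj x hbx
    have h1 := hm (a, x) (Or.inr ⟨rfl, hbx⟩)
    rw [lex_edist_same_adj hadj] at h1
    by_cases hxd : x = d
    · exact Or.inl hxd
    · by_cases hdx : H.Adj d x
      · exact Or.inr hdx
      · rw [lex_edist_same_nonadj hG hn (fun h => hxd h.symm) hdx] at h1
        norm_num at h1
  · rintro hos ⟨a', x⟩ (h | ⟨heq, hbx⟩)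
    · have h1 : (lexProd G H).edist (a, d) (a', x) = 1 := by
        rw [lex_edist_of_ne hG h.ne d x]
        exact edist_eq_one_iff_adj.mpr h
      rw [h1]
      exact Order.one_le_iff_pos.mpr (edist_pos_of_ne (by simp [hbd]))
    · simp only at heq
      subst heq
      by_cases hadj : H.Adj b d
      · rw [lex_edist_same_adj hadj]
        rcases hos hadj x hbx with rfl | hdx
        · simp [SimpleGraph.edist_self]
        · rw [lex_edist_same_adj hdx]
      · rw [lex_edist_same_nonadj hG hn hbd hadj]
        exact lex_edist_same_le_two hG hn a d x

lemma maxDistant_joinK1 {b d : β} (hbd : b ≠ d) :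
    MaxDistant (joinK1 H) (Sum.inr b) (Sum.inr d) ↔ OneSide H b d := by
  constructor
  · intro hm hadj x hbx
    have h1 := hm (Sum.inr x) (joinK1_adj_inr.mpr hbx)
    rw [joinK1_edist_inr_adj hadj] at h1
    by_cases hxd : x = d
    · exact Or.inl hxd
    · by_cases hdx : H.Adj d x
      · exact Or.inr hdx
      · rw [joinK1_edist_inr_nonadj (fun h => hxd h.symm) hdx] at h1
        norm_num at h1
  · rintro hos (u | x) hadjw
    · rw [edist_comm' _ _ (Sum.inl u), joinK1_edist_inl_inr]
      exact Order.one_le_iff_pos.mpr (edist_pos_of_ne (by simp [hbd]))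
    · have hbx : H.Adj b x := hadjw
      by_cases hadj : H.Adj b d
      · rw [joinK1_edist_inr_adj hadj]
        rcases hos hadj x hbx with rfl | hdx
        · simp [SimpleGraph.edist_self]
        · rw [joinK1_edist_inr_adj hdx]
      · rw [joinK1_edist_inr_nonadj hbd hadj]
        exact joinK1_edist_le_two _ _

lemma mmd_lex_same_iff (hG : G.Connected) (hn : 2 ≤ Fintype.card α)
    {a : α} {b d : β} (hbd : b ≠ d) :
    MMD (lexProd G H) (a, b) (a, d) ↔ MMD (joinK1 H) (Sum.inr b) (Sum.inr d) := by
  unfold MMD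
  rw [maxDistant_lex_same hG hn hbd, maxDistant_lex_same hG hn hbd.symm,
    maxDistant_joinK1 hbd, maxDistant_joinK1 hbd.symm]

lemma mmd_joinK1_inr_inr (hdiam : 2 < H.ediam) {u v : Unit ⊕ β} (hm : MMD (joinK1 H) u v)
    (hne : u ≠ v) : ∃ b d, u = Sum.inr b ∧ v = Sum.inr d := by
  have key : ∀ (w : Unit ⊕ β) (t : Unit) (e : β), w = Sum.inr e →
      ¬MaxDistant (joinK1 H) (Sum.inl t) w := by
    rintro w t e rfl hmd
    obtain ⟨x, hx, hdx⟩ := exists_nonadj hdiam e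
    have h1 := hmd (Sum.inr x) (joinK1_adj_inl_inr t x)
    rw [joinK1_edist_inr_nonadj (fun h => hx h.symm) hdx, joinK1_edist_inl_inr] at h1
    norm_num at h1
  match u, v with
  | Sum.inl t, Sum.inl t' => exact absurd rfl hne
  | Sum.inl t, Sum.inr d => exact absurd hm.1 (key _ t d rfl)
  | Sum.inr b, Sum.inl t => exact absurd hm.2 (key _ t b rfl)
  | Sum.inr b, Sum.inr d => exact ⟨b, d, rfl, rfl⟩

lemma edist_le_one_cases {V : Type*} {G' : SimpleGraph V} {x y : V}
    (h : G'.edist x y ≤ 1) : x = y ∨ G'.Adj x y := by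
  rcases lt_or_eq_of_le h with h1 | h1
  · rw [ENat.lt_one_iff_eq_zero, SimpleGraph.edist_eq_zero_iff] at h1
    exact Or.inl h1
  · exact Or.inr (SimpleGraph.edist_eq_one_iff_adj.mp h1)

lemma maxDistant_G_of_lex (hG : G.Connected) (hn : 2 ≤ Fintype.card α)
    (hdiam : 2 < H.ediam) {a c : α} {b d : β} (hac : a ≠ c)
    (hmd : MaxDistant (lexProd G H) (a, b) (c, d)) : MaxDistant G a c := by
  have hnadj : ¬G.Adj a c := by
    intro hadj
    obtain ⟨x, hx, hdx⟩ := exists_nonadj hdiam d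
    have h1 := hmd (c, x) (Or.inl hadj)
    rw [lex_edist_of_ne hG hac b d,
      lex_edist_same_nonadj hG hn (fun h => hx h.symm) hdx,
      edist_eq_one_iff_adj.mpr hadj] at h1
    norm_num at h1
  intro w hw
  have h1 := hmd (w, b) (Or.inl hw)
  rw [lex_edist_of_ne hG hac b d] at h1
  by_cases hwc : w = c
  · subst hwc
    simp [SimpleGraph.edist_self]
  · rwa [lex_edist_of_ne hG (fun h => hwc h.symm) d b] at h1

lemma maxDistant_lex_of_G (hG : G.Connected) {a c : α} (hac : a ≠ c)
    (hnadj : ¬G.Adj a c) (hmd : MaxDistant G a c) (b d : β) :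
    MaxDistant (lexProd G H) (a, b) (c, d) := by
  rintro ⟨a', x⟩ (h | ⟨heq, hx⟩)
  · simp only at h
    have ha'c : c ≠ a' := fun hh => hnadj (hh ▸ h)
    rw [lex_edist_of_ne hG hac b d, lex_edist_of_ne hG ha'c d x]
    exact hmd a' h
  · simp only at heq
    subst heq
    rw [lex_edist_of_ne hG hac b d, lex_edist_of_ne hG (Ne.symm hac) d x]
    exact le_of_eq (edist_comm' G c a)

lemma mmd_lex_ne_iff (hG : G.Connected) (hn : 2 ≤ Fintype.card α)
    (hdiam : 2 < H.ediam) (htw : ∀ u v : α, (∀ w, (G.Adj u w ∨ u = w) ↔ (G.Adj v w ∨ v = w)) → u = v)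
    {a c : α} {b d : β} (hac : a ≠ c) :
    MMD (lexProd G H) (a, b) (c, d) ↔ MMD G a c := by
  constructor
  · intro hm
    exact ⟨maxDistant_G_of_lex hG hn hdiam hac hm.1,
      maxDistant_G_of_lex hG hn hdiam (Ne.symm hac) hm.2⟩
  · intro hm
    have hnadj : ¬G.Adj a c := by
      intro hadj
      refine hac (htw a c fun w => ?_)
      constructor
      · rintro (haw | rfl)
        · rcases edist_le_one_cases (le_trans (hm.1 w haw)
            (le_of_eq (edist_eq_one_iff_adj.mpr hadj))) with h | h
          · exact Or.inr h
          · exact Or.inl h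
        · exact Or.inl hadj.symm
      · rintro (hcw | rfl)
        · rcases edist_le_one_cases (le_trans (hm.2 w hcw)
            (le_of_eq (edist_eq_one_iff_adj.mpr hadj.symm))) with h | h
          · exact Or.inr h
          · exact Or.inl h
        · exact Or.inl hadj
    exact ⟨maxDistant_lex_of_G hG hac hnadj hm.1 b d,
      maxDistant_lex_of_G hG (Ne.symm hac) (fun h => hnadj h.symm) hm.2 d b⟩

end MMDchar
end Lex

section Arith

lemma key_arith (n n' sG sK : ℕ) (h1 : sG ≤ n) :
    sG * n' + (n - sG) * sK = n * sK + n' * sG - sG * sK := by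
  have h2 : sG * sK ≤ n * sK := Nat.mul_le_mul_right _ h1
  rw [Nat.sub_mul, mul_comm n' sG]
  calc sG * n' + (n * sK - sG * sK) = sG * n' + n * sK - sG * sK :=
        (Nat.add_sub_assoc h2 _).symm
    _ = n * sK + sG * n' - sG * sK := by rw [Nat.add_comm (sG * n') (n * sK)]

lemma mono_arith (t s n n' sK : ℕ) (hst : s ≤ t) (htn : t ≤ n) (hk : sK ≤ n') :
    s * n' + (n - s) * sK ≤ t * n' + (n - t) * sK := by
  obtain ⟨bq, rfl⟩ : ∃ bq, t = s + bq := ⟨t - s, by omega⟩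
  have hc : n - s = (n - (s + bq)) + bq := by omega
  rw [hc, Nat.add_mul, Nat.add_mul]
  have hm : bq * sK ≤ bq * n' := Nat.mul_le_mul_left _ hk
  omega

end Arith


theorem stmt_16 [Fintype α] [Fintype β] (G : SimpleGraph α) (H : SimpleGraph β)
    (hG : G.Connected) (hn : 2 ≤ Fintype.card α)
    (htw : ∀ u v : α, TrueTwins G u v → u = v)
    (hn' : 2 ≤ Fintype.card β) (hdiam : 2 < H.ediam) :
    sdim (lexProd G H) =
      Fintype.card α * sdim (joinK1 H) + Fintype.card β * sdim G -
        sdim G * sdim (joinK1 H) := by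
  classical
  have hnβ : Nonempty β := Fintype.card_pos_iff.mp (by omega)
  have hΓc : (lexProd G H).Connected := lex_connected hG hn
  have hKc : (joinK1 H).Connected := joinK1_connected
  -- basic bounds
  have hGle : sdim G ≤ Fintype.card α := by
    have := sdim_le_card_of_generator (univ_generator G)
    simpa using this
  have hKle : sdim (joinK1 H) ≤ Fintype.card β := by
    have hgen : IsStrongGenerator (joinK1 H) ((Finset.univ : Finset β).image Sum.inr) := by
      intro u v huv
      match u, v with
      | Sum.inl t, Sum.inl t' => exact absurd rfl huv
      | Sum.inl t, Sum.inr d =>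
          exact ⟨Sum.inr d, Finset.mem_image_of_mem _ (Finset.mem_univ d),
            resolve_self_right _ _ _⟩
      | Sum.inr b, v =>
          exact ⟨Sum.inr b, Finset.mem_image_of_mem _ (Finset.mem_univ b),
            resolve_self_left _ _ _⟩
    have := sdim_le_card_of_generator hgen
    rwa [Finset.card_image_of_injective _ Sum.inr_injective, Finset.card_univ] at this
  -- the common target value
  have htarget : Fintype.card α * sdim (joinK1 H) + Fintype.card β * sdim G - sdim G * sdim (joinK1 H) = sdim G * Fintype.card β + (Fintype.card α - sdim G) * sdim (joinK1 H) :=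
    (key_arith (Fintype.card α) (Fintype.card β) (sdim G) (sdim (joinK1 H)) hGle).symm
  rw [htarget]
  -- UPPER BOUND
  obtain ⟨SG, hSGgen, hSGcard⟩ := exists_sdim_generator G
  obtain ⟨SK, hSKgen, hSKcard⟩ := exists_sdim_generator (joinK1 H)
  have hWcov : ∀ a c : α, a ≠ c → MMD G a c → a ∈ SG ∨ c ∈ SG := by
    intro a c hac hm
    obtain ⟨w, hwS, hwr⟩ := hSGgen a c hac
    rcases mem_of_resolve_mmd hG hm hwr with rfl | rfl
    · exact Or.inl hwS
    · exact Or.inr hwS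
  set B : Finset β := Finset.univ.filter (fun b => Sum.inr b ∈ SK) with hB_def
  have hBcard : B.card ≤ sdim (joinK1 H) := by
    rw [← hSKcard]
    apply Finset.card_le_card_of_injOn (fun b => Sum.inr b)
    · intro b hb
      exact (Finset.mem_filter.mp (Finset.mem_coe.mp hb)).2
    · intro x _ y _ h
      exact Sum.inr_injective h
  have hBcov : ∀ b d : β, b ≠ d → MMD (joinK1 H) (Sum.inr b) (Sum.inr d) →
      b ∈ B ∨ d ∈ B := by
    intro b d hbd hm
    obtain ⟨w, hwS, hwr⟩ := hSKgen (Sum.inr b) (Sum.inr d) (by simp [hbd])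
    rcases mem_of_resolve_mmd hKc hm hwr with rfl | rfl
    · exact Or.inl (by simp [hB_def, hwS])
    · exact Or.inr (by simp [hB_def, hwS])
  set C : Finset (α × β) := SG ×ˢ (Finset.univ : Finset β) ∪ SGᶜ ×ˢ B with hC_def
  have hCmem : ∀ p : α × β, p ∈ C ↔ p.1 ∈ SG ∨ p.2 ∈ B := by
    intro p
    simp only [hC_def, Finset.mem_union, Finset.mem_product, Finset.mem_univ, and_true,
      Finset.mem_compl]
    tauto
  have hCgen : IsStrongGenerator (lexProd G H) C := by
    apply generator_of_cover hΓc
    rintro ⟨a, b⟩ ⟨c, d⟩ hne hm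
    by_cases hac : a = c
    · subst hac
      have hbd : b ≠ d := fun h => hne (by rw [h])
      have hm' := (mmd_lex_same_iff hG hn hbd).mp hm
      rcases hBcov b d hbd hm' with h | h
      · exact Or.inl ((hCmem _).mpr (Or.inr h))
      · exact Or.inr ((hCmem _).mpr (Or.inr h))
    · have hm' := (mmd_lex_ne_iff hG hn hdiam (fun u v h => htw u v h) hac).mp hm
      rcases hWcov a c hac hm' with h | h
      · exact Or.inl ((hCmem _).mpr (Or.inl h))
      · exact Or.inr ((hCmem _).mpr (Or.inl h))
  have hCcard : C.card = sdim G * Fintype.card β + (Fintype.card α - sdim G) * B.card := by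
    rw [hC_def, Finset.card_union_of_disjoint, Finset.card_product, Finset.card_product,
      Finset.card_univ, Finset.card_compl, hSGcard]
    · rw [Finset.disjoint_left]
      rintro ⟨a, b⟩ hab hab'
      rw [Finset.mem_product] at hab hab'
      exact (Finset.mem_compl.mp hab'.1) hab.1
  have hupper : sdim (lexProd G H) ≤ sdim G * Fintype.card β + (Fintype.card α - sdim G) * sdim (joinK1 H) := by
    calc sdim (lexProd G H) ≤ C.card := sdim_le_card_of_generator hCgen
      _ = sdim G * Fintype.card β + (Fintype.card α - sdim G) * B.card := hCcard
      _ ≤ sdim G * Fintype.card β + (Fintype.card α - sdim G) * sdim (joinK1 H) := by gcongr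
  -- LOWER BOUND
  obtain ⟨S, hSgen, hScard⟩ := exists_sdim_generator (lexProd G H)
  have hcovΓ : ∀ p q : α × β, p ≠ q → MMD (lexProd G H) p q → p ∈ S ∨ q ∈ S := by
    intro p q hne hm
    obtain ⟨w, hwS, hwr⟩ := hSgen p q hne
    rcases mem_of_resolve_mmd hΓc hm hwr with rfl | rfl
    · exact Or.inl hwS
    · exact Or.inr hwS
  set A : Finset α := Finset.univ.filter (fun a => ∀ b, (a, b) ∈ S) with hA_def
  have hAcov : ∀ a c : α, a ≠ c → MMD G a c → a ∈ A ∨ c ∈ A := by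
    intro a c hac hm
    by_contra hcon
    push_neg at hcon
    obtain ⟨ha, hc⟩ := hcon
    simp only [hA_def, Finset.mem_filter, Finset.mem_univ, true_and, not_forall] at ha hc
    obtain ⟨b0, hb0⟩ := ha
    obtain ⟨d0, hd0⟩ := hc
    rcases hcovΓ (a, b0) (c, d0) (by simp [hac]) ((mmd_lex_ne_iff hG hn hdiam (fun u v h => htw u v h) hac).mpr hm)
      with h | h
    · exact hb0 h
    · exact hd0 h
  have hA1 : sdim G ≤ A.card :=
    sdim_le_card_of_generator (generator_of_cover hG A hAcov)
  have hA2 : A.card ≤ Fintype.card α := by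
    exact Finset.card_le_univ A
  set Bf : α → Finset β := fun a => Finset.univ.filter (fun b => (a, b) ∈ S) with hBf_def
  have hcol : ∀ a, a ∉ A → sdim (joinK1 H) ≤ (Bf a).card := by
    intro a ha
    have hTcov : ∀ u v : Unit ⊕ β, u ≠ v → MMD (joinK1 H) u v →
        u ∈ (Bf a).image Sum.inr ∨ v ∈ (Bf a).image Sum.inr := by
      intro u v hne hm
      obtain ⟨b, d, rfl, rfl⟩ := mmd_joinK1_inr_inr hdiam hm hne
      have hbd : b ≠ d := fun h => hne (by rw [h])
      have hm' := (mmd_lex_same_iff (a := a) hG hn hbd).mpr hm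
      rcases hcovΓ (a, b) (a, d) (by simp [hbd]) hm' with h | h
      · exact Or.inl (Finset.mem_image_of_mem _ (by simp [hBf_def, h]))
      · exact Or.inr (Finset.mem_image_of_mem _ (by simp [hBf_def, h]))
    calc sdim (joinK1 H) ≤ ((Bf a).image Sum.inr).card :=
          sdim_le_card_of_generator (generator_of_cover hKc _ hTcov)
      _ = (Bf a).card := Finset.card_image_of_injective _ Sum.inr_injective
  have hfull : ∀ a, a ∈ A → (Bf a).card = Fintype.card β := by
    intro a ha
    simp only [hA_def, Finset.mem_filter, Finset.mem_univ, true_and] at ha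
    have : Bf a = Finset.univ := by
      apply Finset.eq_univ_of_forall
      intro b
      simp [hBf_def, ha b]
    rw [this, Finset.card_univ]
  have hcount : S.card = ∑ a : α, (Bf a).card := by
    rw [Finset.card_eq_sum_card_fiberwise (f := Prod.fst) (t := Finset.univ)
      (fun x _ => Finset.mem_univ _)]
    apply Finset.sum_congr rfl
    intro a _
    apply Finset.card_bij (fun p _ => p.2)
    · rintro ⟨x, y⟩ hp
      simp only [Finset.mem_filter] at hp
      obtain ⟨hp1, hp2⟩ := hp
      have hp2' : x = a := hp2
      subst hp2'
      simp [hBf_def, hp1]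
    · rintro ⟨x, y⟩ hx ⟨x', y'⟩ hx' h
      simp only [Finset.mem_filter] at hx hx'
      have h' : y = y' := h
      have hxx : x = x' := by
        have e1 : x = a := hx.2
        have e2 : x' = a := hx'.2
        rw [e1, e2]
      rw [Prod.mk.injEq]
      exact ⟨hxx, h'⟩
    · intro b hb
      simp only [hBf_def, Finset.mem_filter, Finset.mem_univ, true_and] at hb
      exact ⟨(a, b), by simp [hb], rfl⟩
  have hlower : sdim G * Fintype.card β + (Fintype.card α - sdim G) * sdim (joinK1 H) ≤ S.card := by
    have hsplit : ∑ a : α, (Bf a).card =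
        (∑ a ∈ A, (Bf a).card) + ∑ a ∈ Aᶜ, (Bf a).card :=
      (Finset.sum_add_sum_compl A _).symm
    have h1 : A.card * Fintype.card β ≤ ∑ a ∈ A, (Bf a).card := by
      calc A.card * Fintype.card β = ∑ _a ∈ A, Fintype.card β := by rw [Finset.sum_const, smul_eq_mul]
        _ ≤ ∑ a ∈ A, (Bf a).card :=
            Finset.sum_le_sum (fun a ha => le_of_eq (hfull a ha).symm)
    have h2 : (Fintype.card α - A.card) * sdim (joinK1 H) ≤ ∑ a ∈ Aᶜ, (Bf a).card := by
      have hcc : Aᶜ.card = Fintype.card α - A.card := by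
        rw [Finset.card_compl]
      calc (Fintype.card α - A.card) * sdim (joinK1 H) = ∑ _a ∈ Aᶜ, sdim (joinK1 H) := by
            rw [Finset.sum_const, smul_eq_mul, hcc]
        _ ≤ ∑ a ∈ Aᶜ, (Bf a).card :=
            Finset.sum_le_sum (fun a ha => hcol a (Finset.mem_compl.mp ha))
    calc sdim G * Fintype.card β + (Fintype.card α - sdim G) * sdim (joinK1 H) ≤ A.card * Fintype.card β + (Fintype.card α - A.card) * sdim (joinK1 H) :=
          mono_arith A.card (sdim G) (Fintype.card α) (Fintype.card β) (sdim (joinK1 H)) hA1 hA2 hKle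
      _ ≤ (∑ a ∈ A, (Bf a).card) + ∑ a ∈ Aᶜ, (Bf a).card := Nat.add_le_add h1 h2
      _ = S.card := by rw [← hsplit, hcount]
  rw [hScard] at hlower
  exact le_antisymm hupper hlower



end Paper
end
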